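/- Let Ω = Ω_L + Ω_D + Ω_U be the block decomposition of a symmetric positive definite matrix and suppose there exists γ > 0 such that G C Gᵀ ⪯ γ·(Ω_L+Ω_D)⁻¹Ω_D(Ω_L+Ω_D)⁻ᵀ, where C = Ω⁻¹ and G = −(Ω_L+Ω_D)⁻¹Ω_U. Then G C Gᵀ ⪯ (γ/(1+γ))·C. -/

import Mathlib

open Matrix

/-- Block strictly-lower-triangular part (with respect to `q × q` blocks). -/
def Matrix.blkLower {m q : ℕ} (Ω : Matrix (Fin m × Fin q) (Fin m × Fin q) ℝ) :
    Matrix (Fin m × Fin q) (Fin m × Fin q) ℝ :=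
  Matrix.of fun p r => if r.1 < p.1 then Ω p r else 0

/-- Block-diagonal part (with respect to `q × q` blocks). -/
def Matrix.blkDiag {m q : ℕ} (Ω : Matrix (Fin m × Fin q) (Fin m × Fin q) ℝ) :
    Matrix (Fin m × Fin q) (Fin m × Fin q) ℝ :=
  Matrix.of fun p r => if p.1 = r.1 then Ω p r else 0

/-- Block strictly-upper-triangular part (with respect to `q × q` blocks). -/
def Matrix.blkUpper {m q : ℕ} (Ω : Matrix (Fin m × Fin q) (Fin m × Fin q) ℝ) :
    Matrix (Fin m × Fin q) (Fin m × Fin q) ℝ :=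
  Matrix.of fun p r => if p.1 < r.1 then Ω p r else 0

/-- A nonnegative scalar multiple of a real positive semidefinite matrix is PSD. -/
lemma posSemidef_smul_aux {n : Type*} [Fintype n] {A : Matrix n n ℝ} (hA : A.PosSemidef)
    {c : ℝ} (hc : 0 ≤ c) : (c • A).PosSemidef := by
  refine ⟨?_, fun x => ?_⟩
  · unfold Matrix.IsHermitian
    rw [conjTranspose_smul, hA.1]
    simp
  · have h := mul_nonneg hc (hA.2 x)
    simp only [Finsupp.mul_sum] at h
    simpa [mul_assoc, mul_left_comm] using h

/-- if `Ω = Ω_L + Ω_D + Ω_U` is the block decomposition of a symmetric positive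
definite matrix, `C = Ω⁻¹`, `G = -(Ω_L+Ω_D)⁻¹ Ω_U`, and there is `γ > 0` with
`G C Gᵀ ⪯ γ (Ω_L+Ω_D)⁻¹ Ω_D (Ω_L+Ω_D)⁻ᵀ`, then `G C Gᵀ ⪯ (γ/(1+γ)) C`. -/
theorem gaussSeidel_contraction_of_noise_bound
    {m q : ℕ} (Ω : Matrix (Fin m × Fin q) (Fin m × Fin q) ℝ) (hΩ : Ω.PosDef)
    (hInv : IsUnit (Ω.blkLower + Ω.blkDiag)) (γ : ℝ) (hγ : 0 < γ)
    (hbound :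
      (γ • ((Ω.blkLower + Ω.blkDiag)⁻¹ * Ω.blkDiag * ((Ω.blkLower + Ω.blkDiag)⁻¹)ᵀ) -
        (-((Ω.blkLower + Ω.blkDiag)⁻¹ * Ω.blkUpper)) * Ω⁻¹ *
          (-((Ω.blkLower + Ω.blkDiag)⁻¹ * Ω.blkUpper))ᵀ).PosSemidef) :
    ((γ / (1 + γ)) • Ω⁻¹ -
        (-((Ω.blkLower + Ω.blkDiag)⁻¹ * Ω.blkUpper)) * Ω⁻¹ *
          (-((Ω.blkLower + Ω.blkDiag)⁻¹ * Ω.blkUpper))ᵀ).PosSemidef := by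
  set M := Ω.blkLower + Ω.blkDiag with hM
  set U := Ω.blkUpper with hU
  set C := Ω⁻¹ with hC
  -- basic invertibility facts
  have hΩdet : IsUnit Ω.det := hΩ.det_pos.ne'.isUnit
  have hMdet : IsUnit M.det := (Matrix.isUnit_iff_isUnit_det M).mp hInv
  have hMTdet : IsUnit Mᵀ.det := by rwa [Matrix.det_transpose]
  have hΩC : Ω * C = 1 := Matrix.mul_nonsing_inv Ω hΩdet
  have hCΩ : C * Ω = 1 := Matrix.nonsing_inv_mul Ω hΩdet
  have hMM : M⁻¹ * M = 1 := Matrix.nonsing_inv_mul M hMdet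
  have hMT : Mᵀ * (M⁻¹)ᵀ = 1 := by
    rw [Matrix.transpose_nonsing_inv]
    exact Matrix.mul_nonsing_inv Mᵀ hMTdet
  -- symmetry of Ω
  have hΩT : Ωᵀ = Ω := by
    have := hΩ.isHermitian
    simpa [Matrix.IsHermitian] using this
  -- transpose relations of the block parts
  have hLT : (Ω.blkLower)ᵀ = Ω.blkUpper := by
    ext p r
    simp only [Matrix.transpose_apply, Matrix.blkLower, Matrix.blkUpper, Matrix.of_apply]
    split_ifs with h
    · have : Ωᵀ p r = Ω p r := by rw [hΩT]
      simpa [Matrix.transpose_apply] using this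
    · rfl
  have hDT : (Ω.blkDiag)ᵀ = Ω.blkDiag := by
    ext p r
    simp only [Matrix.transpose_apply, Matrix.blkDiag, Matrix.of_apply]
    rcases eq_or_ne p.1 r.1 with h | h
    · rw [if_pos h.symm, if_pos h]
      have : Ωᵀ p r = Ω p r := by rw [hΩT]
      simpa using this
    · rw [if_neg (Ne.symm h), if_neg h]
  -- block decomposition Ω = L + D + U
  have hdec : Ω.blkLower + Ω.blkDiag + Ω.blkUpper = Ω := by
    ext p r
    simp only [Matrix.add_apply, Matrix.blkLower, Matrix.blkDiag, Matrix.blkUpper,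
      Matrix.of_apply]
    rcases lt_trichotomy p.1 r.1 with h | h | h
    · rw [if_neg (asymm h), if_neg h.ne, if_pos h]; ring
    · rw [if_neg (by rw [h]; exact lt_irrefl _), if_pos h,
        if_neg (by rw [h]; exact lt_irrefl _)]; ring
    · rw [if_pos h, if_neg h.ne', if_neg (asymm h)]; ring
  have hMU : M + U = Ω := hdec
  have hMsum : M + Mᵀ = Ω + Ω.blkDiag := by
    have h' : M + Mᵀ = (Ω.blkLower + Ω.blkDiag + Ω.blkUpper) + Ω.blkDiag := by
      rw [hM, Matrix.transpose_add, hLT, hDT]; abel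
    rw [h', hdec]
  -- key identity: U * C * Uᵀ = M * C * Mᵀ - Ω_D
  have hUeq : U = Ω - M := by rw [← hMU]; abel
  have hkey1 : U * C * Uᵀ = M * C * Mᵀ - Ω.blkDiag := by
    have hD : Ω.blkDiag = M + Mᵀ - Ω := by rw [hMsum]; abel
    rw [hUeq, hD, Matrix.transpose_sub, hΩT]
    have expand : (Ω - M) * C * (Ω - Mᵀ) =
        Ω * C * Ω - Ω * C * Mᵀ - M * C * Ω + M * C * Mᵀ := by noncomm_ring
    rw [expand, hΩC, Matrix.mul_assoc M C Ω, hCΩ]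
    simp only [Matrix.one_mul, Matrix.mul_one]
    abel
  -- hence G C Gᵀ = C - M⁻¹ Ω_D (M⁻¹)ᵀ
  have hkey : (-(M⁻¹ * U)) * C * (-(M⁻¹ * U))ᵀ =
      C - M⁻¹ * Ω.blkDiag * (M⁻¹)ᵀ := by
    have h1 : (-(M⁻¹ * U)) * C * (-(M⁻¹ * U))ᵀ = M⁻¹ * (U * C * Uᵀ) * (M⁻¹)ᵀ := by
      rw [Matrix.transpose_neg, Matrix.transpose_mul]
      rw [show (-(M⁻¹ * U)) * C * -(Uᵀ * (M⁻¹)ᵀ) = M⁻¹ * U * C * (Uᵀ * (M⁻¹)ᵀ) by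
        noncomm_ring]
      noncomm_ring
    rw [h1, hkey1, Matrix.mul_sub, Matrix.sub_mul]
    have h2 : M⁻¹ * (M * C * Mᵀ) * (M⁻¹)ᵀ = C := by
      rw [show M⁻¹ * (M * C * Mᵀ) * (M⁻¹)ᵀ = (M⁻¹ * M) * C * (Mᵀ * (M⁻¹)ᵀ) by
        noncomm_ring, hMM, hMT, Matrix.one_mul, Matrix.mul_one]
    rw [h2]
  -- now conclude by scalar algebra
  have hN : M⁻¹ * Ω.blkDiag * (M⁻¹)ᵀ =
      C - (-(M⁻¹ * U)) * C * (-(M⁻¹ * U))ᵀ := by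
    rw [hkey]; abel
  have h1γ : (1 : ℝ) + γ ≠ 0 := by positivity
  have hfinal : (γ / (1 + γ)) • C - (-(M⁻¹ * U)) * C * (-(M⁻¹ * U))ᵀ =
      (1 / (1 + γ)) • (γ • (M⁻¹ * Ω.blkDiag * (M⁻¹)ᵀ) -
        (-(M⁻¹ * U)) * C * (-(M⁻¹ * U))ᵀ) := by
    rw [hN]
    match_scalars <;> (field_simp; try ring)
  rw [hfinal]
  exact posSemidef_smul_aux hbound (by positivity)
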